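/- (Main theorem: the tipping point for affirmative action.) Let V : [0,1] → ℝ be a continuous Bellman fixed point that is strictly decreasing on [0,1] and differentiable with strictly negative derivative on (0,1). Then: (i) for every state φ0 < φ0*, the threshold σ attains the supremum at φ0 (V(φ0) = R(φ0,σ) + γ·V(S(φ0,σ))) and θ1(φ0,σ) ≥ σ, so the optimal allocation coincides with imposing the common threshold σ(1−α)+τ(1−φ0) on both groups (no affirmative action); (ii) for every state φ0 with φ0* < φ0 < 1, every θ0 ∈ Θ(φ0) that attains the supremum at φ0 and lies in the interior of Θ(φ0) satisfies θ0 < θ1(φ0,θ0) (strict affirmative action). -/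

import Mathlib

set_option maxHeartbeats 1000000
open Set


/-- Advantaged-group threshold θ1(φ0,θ0) (for φ0 < 1). -/
noncomputable def θ1 (σ τ α φ0 θ0 : ℝ) : ℝ :=
  (σ * (1 - α) + (1 - φ0) * τ - φ0 * θ0) / (1 - φ0)

/-- Admissible threshold set Θ(φ0). -/
def Θ (σ α φ0 : ℝ) : Set ℝ :=
  {θ0 | θ0 ∈ Set.Icc (0 : ℝ) σ ∧ φ0 * (1 - θ0 / σ) ≤ α ∧
    φ0 * (1 - θ0 / σ) + (1 - φ0) ≥ α}

/-- State transition S(φ0,θ0). -/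
noncomputable def S (σ φ0 θ0 : ℝ) : ℝ := φ0 - (φ0 / (2 * σ)) * (σ ^ 2 - θ0 ^ 2)

/-- Reward function R(φ0,θ0), with the boundary convention at φ0 = 1. -/
noncomputable def R (σ τ α φ0 θ0 : ℝ) : ℝ :=
  if φ0 < 1 then
    (φ0 / (2 * σ)) * (σ ^ 2 - θ0 ^ 2)
      + ((1 - φ0) / (2 * σ)) * ((σ + τ) ^ 2 - (θ1 σ τ α φ0 θ0) ^ 2)
  else (1 / (2 * σ)) * (σ ^ 2 - θ0 ^ 2)

/-- Bellman operator (T f)(φ0) = sup over admissible θ0 of R + γ f(S). -/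
noncomputable def T (σ τ α γ : ℝ) (f : ℝ → ℝ) (φ0 : ℝ) : ℝ :=
  sSup ((fun θ0 => R σ τ α φ0 θ0 + γ * f (S σ φ0 θ0)) '' Θ σ α φ0)

/-- The tipping point φ0*. -/
noncomputable def φstar (σ τ α γ : ℝ) : ℝ :=
  max 0 (min (1 - α)
    (1 - (α * σ / (2 * τ)) * (1 + Real.sqrt (1 + 2 * τ * γ / (1 - γ)))))

/-- The candidate value function below the tipping point. -/
noncomputable def Wfun (σ τ α γ x : ℝ) : ℝ :=
  (α * (σ + τ) - α ^ 2 * σ / (2 * (1 - x))) / (1 - γ)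

section lemmas
variable {σ τ α γ φ0 θ0 : ℝ}

lemma S_self (σ φ0 : ℝ) : S σ φ0 σ = φ0 := by simp [S]

lemma S_le_self (hσ : 0 < σ) (hφ : 0 ≤ φ0) (hθ0 : 0 ≤ θ0) (hθ : θ0 ≤ σ) : S σ φ0 θ0 ≤ φ0 := by
  have h : 0 ≤ (φ0 / (2 * σ)) * (σ ^ 2 - θ0 ^ 2) := by
    apply mul_nonneg (by positivity); nlinarith
  simp [S]; linarith

lemma S_nonneg (hσ : 0 < σ) (hσ1 : σ ≤ 1) (hφ : 0 ≤ φ0) (hθ0 : 0 ≤ θ0) :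
    0 ≤ S σ φ0 θ0 := by
  have h : S σ φ0 θ0 = φ0 * (1 - (σ ^ 2 - θ0 ^ 2) / (2 * σ)) := by
    simp [S]; ring
  rw [h]
  apply mul_nonneg hφ
  rw [sub_nonneg, div_le_one (by positivity)]
  nlinarith

lemma Rσ_formula (hσ : 0 < σ) (hφ1 : φ0 < 1) :
    R σ τ α φ0 σ = α * (σ + τ) - α ^ 2 * σ / (2 * (1 - φ0)) := by
  have h1 : (1:ℝ) - φ0 ≠ 0 := by linarith
  rw [R, if_pos hφ1, θ1]
  field_simp
  ring

lemma σ_mem_Θ (hσ : 0 < σ) (hφ : 0 ≤ φ0) (hα : 0 < α) (h : φ0 ≤ 1 - α) :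
    σ ∈ Θ σ α φ0 := by
  refine ⟨⟨le_of_lt hσ, le_refl σ⟩, ?_, ?_⟩
  · rw [div_self (ne_of_gt hσ)]; simp; positivity
  · rw [div_self (ne_of_gt hσ)]; simp; linarith

lemma Θ_subset (σ α φ0 : ℝ) : Θ σ α φ0 ⊆ Icc 0 σ := fun _ h => h.1

lemma Θ_compact (σ α φ0 : ℝ) : IsCompact (Θ σ α φ0) := by
  apply IsCompact.of_isClosed_subset isCompact_Icc _ (Θ_subset σ α φ0)
  have h : Θ σ α φ0 = Icc 0 σ ∩ ({θ0 | φ0 * (1 - θ0 / σ) ≤ α} ∩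
      {θ0 | α ≤ φ0 * (1 - θ0 / σ) + (1 - φ0)}) := by
    ext x; simp [Θ, Set.mem_setOf_eq, and_assoc, ge_iff_le]
  rw [h]
  refine isClosed_Icc.inter (IsClosed.inter ?_ ?_)
  · exact isClosed_le (by fun_prop) continuous_const
  · exact isClosed_le continuous_const (by fun_prop)

lemma obj_contOn (hσ : 0 < σ) (hσ1 : σ ≤ 1) (hφ : 0 ≤ φ0) (hφ1 : φ0 < 1)
    (V : ℝ → ℝ) (hVc : ContinuousOn V (Set.Icc (0 : ℝ) 1)) :
    ContinuousOn (fun t => R σ τ α φ0 t + γ * V (S σ φ0 t)) (Icc 0 σ) := by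
  apply ContinuousOn.add
  · have h : R σ τ α φ0 = fun t =>
        (φ0 / (2 * σ)) * (σ ^ 2 - t ^ 2)
          + ((1 - φ0) / (2 * σ)) * ((σ + τ) ^ 2 -
            ((σ * (1 - α) + (1 - φ0) * τ - φ0 * t) / (1 - φ0)) ^ 2) := by
      funext t; rw [R, if_pos hφ1, θ1]
    rw [h]
    fun_prop
  · apply ContinuousOn.mul continuousOn_const
    apply hVc.comp (by unfold S; fun_prop)
    intro t ht
    exact ⟨S_nonneg hσ hσ1 hφ ht.1, le_trans (S_le_self hσ hφ ht.1 ht.2) (le_of_lt hφ1)⟩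

lemma obj_bddAbove (hσ : 0 < σ) (hσ1 : σ ≤ 1) (hφ : 0 ≤ φ0) (hφ1 : φ0 < 1)
    (V : ℝ → ℝ) (hVc : ContinuousOn V (Set.Icc (0 : ℝ) 1)) :
    BddAbove ((fun t => R σ τ α φ0 t + γ * V (S σ φ0 t)) '' Θ σ α φ0) :=
  (Θ_compact σ α φ0).bddAbove_image
    ((obj_contOn hσ hσ1 hφ hφ1 V hVc).mono (Θ_subset σ α φ0))

end lemmas


lemma alg_key {σ τ α γ φ θ q : ℝ} (hσ : 0 < σ) (hτ : 0 < τ) (hα : 0 < α)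
    (hγ : 0 < γ) (hγ1 : γ < 1) (hφ : 0 ≤ φ) (hφ1 : φ < 1)
    (hθ0 : 0 ≤ θ) (hθσ : θ ≤ σ)
    (hq : 2 * σ * q = 2 * σ * (1 - φ) + φ * (σ ^ 2 - θ ^ 2))
    (key : γ * α ^ 2 * σ ^ 2 ≤ 2 * (1 - γ) * ((1 - φ) * (τ * (1 - φ) - α * σ))) :
    (φ / (2 * σ)) * (σ ^ 2 - θ ^ 2)
      + ((1 - φ) / (2 * σ)) * ((σ + τ) ^ 2 -
        ((σ * (1 - α) + (1 - φ) * τ - φ * θ) / (1 - φ)) ^ 2)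
      + γ * ((α * (σ + τ) - α ^ 2 * σ / (2 * q)) / (1 - γ))
    ≤ (α * (σ + τ) - α ^ 2 * σ / (2 * (1 - φ))) / (1 - γ) := by
  have hp : (0:ℝ) < 1 - φ := by linarith
  have hg : (0:ℝ) < 1 - γ := by linarith
  have hqp : 1 - φ ≤ q := by nlinarith [mul_nonneg hφ (by nlinarith : (0:ℝ) ≤ σ ^ 2 - θ ^ 2)]
  have hqpos : 0 < q := lt_of_lt_of_le hp hqp
  set K := 2 * (σ + τ) - 2 * α * σ / (1 - φ) + φ * (σ - θ) / (1 - φ) - σ - θ with hK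
  set P := 2 * (σ + τ) * (1 - φ) - 2 * α * σ + φ * (σ - θ) - (σ + θ) * (1 - φ) with hPdef
  have hKP : (1 - φ) * K = P := by rw [hK, hPdef]; field_simp; ring
  -- identity A : Rθ-expression in terms of rφ and K
  have hA : (φ / (2 * σ)) * (σ ^ 2 - θ ^ 2)
      + ((1 - φ) / (2 * σ)) * ((σ + τ) ^ 2 -
        ((σ * (1 - α) + (1 - φ) * τ - φ * θ) / (1 - φ)) ^ 2)
      = (α * (σ + τ) - α ^ 2 * σ / (2 * (1 - φ))) - (φ * (σ - θ) / (2 * σ)) * K := by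
    rw [hK]; field_simp; ring
  -- identity G : difference of the r-terms
  have hq2 : q - (1 - φ) = φ * (σ ^ 2 - θ ^ 2) / (2 * σ) := by
    field_simp; linarith [hq]
  have hG : α ^ 2 * σ / (2 * (1 - φ)) - α ^ 2 * σ / (2 * q)
      = α ^ 2 * φ * (σ - θ) * (σ + θ) / (4 * q * (1 - φ)) := by
    have h1 : α ^ 2 * σ / (2 * (1 - φ)) - α ^ 2 * σ / (2 * q)
        = α ^ 2 * σ * (q - (1 - φ)) / (2 * q * (1 - φ)) := by
      field_simp
    rw [h1, hq2]; field_simp; ring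
  -- core scalar inequality
  have hP5 : 2 * ((1 - φ) * τ - α * σ) ≤ P := by rw [hPdef]; nlinarith
  have hcore : γ * α ^ 2 * (σ + θ) / (4 * q * (1 - φ)) ≤ (1 - γ) * K / (2 * σ) := by
    rw [div_le_div_iff₀ (by positivity) (by positivity)]
    have h8 : (1 - γ) * K * (4 * q * (1 - φ)) = 4 * q * (1 - γ) * P := by
      rw [← hKP]; ring
    rw [h8]
    have hτα : 0 < (1 - φ) * τ - α * σ := by
      nlinarith [key, mul_pos (mul_pos hγ (pow_pos hα 2)) (pow_pos hσ 2), mul_pos hg hp]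
    have h6 : 4 * (1 - φ) * (1 - γ) * (2 * ((1 - φ) * τ - α * σ)) ≤ 4 * q * (1 - γ) * P := by
      have h6a : 4 * (1 - φ) * (1 - γ) ≤ 4 * q * (1 - γ) := by
        nlinarith [mul_le_mul_of_nonneg_right hqp (by linarith : (0:ℝ) ≤ 4 * (1 - γ))]
      have := mul_le_mul h6a hP5 (by linarith) (by positivity)
      linarith
    nlinarith [mul_nonneg (mul_nonneg (mul_nonneg hγ.le (sq_nonneg α)) hσ.le)
      (by linarith : (0:ℝ) ≤ σ - θ)]
  -- multiply core by φ(σ−θ) ≥ 0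
  have ht0 : 0 ≤ φ * (σ - θ) := mul_nonneg hφ (by linarith)
  have hmul := mul_le_mul_of_nonneg_left hcore ht0
  have he1 : φ * (σ - θ) * ((1 - γ) * K / (2 * σ)) = (1 - γ) * ((φ * (σ - θ) / (2 * σ)) * K) := by
    ring
  have he2 : φ * (σ - θ) * (γ * α ^ 2 * (σ + θ) / (4 * q * (1 - φ)))
      = γ * (α ^ 2 * φ * (σ - θ) * (σ + θ) / (4 * q * (1 - φ))) := by ring
  rw [he1, he2] at hmul
  -- assemble
  have hH : (1 - γ) * ((φ / (2 * σ)) * (σ ^ 2 - θ ^ 2)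
      + ((1 - φ) / (2 * σ)) * ((σ + τ) ^ 2 -
        ((σ * (1 - α) + (1 - φ) * τ - φ * θ) / (1 - φ)) ^ 2))
      + γ * (α * (σ + τ) - α ^ 2 * σ / (2 * q))
      ≤ α * (σ + τ) - α ^ 2 * σ / (2 * (1 - φ)) := by
    rw [hA]; nlinarith [hmul, hG]
  -- divide by (1 - γ)
  set X := (φ / (2 * σ)) * (σ ^ 2 - θ ^ 2)
      + ((1 - φ) / (2 * σ)) * ((σ + τ) ^ 2 -
        ((σ * (1 - α) + (1 - φ) * τ - φ * θ) / (1 - φ)) ^ 2) with hX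
  set Y := α * (σ + τ) - α ^ 2 * σ / (2 * q) with hY
  set Z := α * (σ + τ) - α ^ 2 * σ / (2 * (1 - φ)) with hZ
  have hdiv : Z / (1 - γ) - (X + γ * (Y / (1 - γ))) = (Z - ((1 - γ) * X + γ * Y)) / (1 - γ) := by
    field_simp
  have : 0 ≤ (Z - ((1 - γ) * X + γ * Y)) / (1 - γ) := div_nonneg (by linarith [hH]) hg.le
  linarith [hdiv ▸ this]


lemma key_of_le {σ τ α γ φ : ℝ} (hσ : 0 < σ) (hτ : 0 < τ) (hα : 0 < α)
    (hγ : 0 < γ) (hγ1 : γ < 1)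
    (h : (α * σ / (2 * τ)) * (1 + Real.sqrt (1 + 2 * τ * γ / (1 - γ))) ≤ 1 - φ) :
    γ * α ^ 2 * σ ^ 2 ≤ 2 * (1 - γ) * ((1 - φ) * (τ * (1 - φ) - α * σ)) := by
  have hg : (0:ℝ) < 1 - γ := by linarith
  set s := Real.sqrt (1 + 2 * τ * γ / (1 - γ)) with hs
  have hD : (0:ℝ) ≤ 1 + 2 * τ * γ / (1 - γ) := by positivity
  have hs2 : s ^ 2 = 1 + 2 * τ * γ / (1 - γ) := Real.sq_sqrt hD
  have hs0 : 0 ≤ s := Real.sqrt_nonneg _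
  have hs2' : (1 - γ) * s ^ 2 = (1 - γ) + 2 * τ * γ := by
    rw [hs2]; field_simp
  have h2 : 0 ≤ 2 * τ * (1 - φ) - α * σ * (1 + s) := by
    have h5 := mul_le_mul_of_nonneg_left h (by positivity : (0:ℝ) ≤ 2 * τ)
    have he : 2 * τ * (α * σ / (2 * τ) * (1 + s)) = α * σ * (1 + s) := by
      field_simp
    linarith [he ▸ h5]
  have h3 : 0 ≤ 2 * τ * (1 - φ) - α * σ * (1 - s) := by
    nlinarith [mul_nonneg (mul_nonneg hα.le hσ.le) hs0]
  have hA : 0 ≤ (1 - γ) * ((2 * τ * (1 - φ) - α * σ * (1 + s)) *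
      (2 * τ * (1 - φ) - α * σ * (1 - s))) := mul_nonneg hg.le (mul_nonneg h2 h3)
  have hB : (1 - γ) * ((2 * τ * (1 - φ) - α * σ * (1 + s)) *
      (2 * τ * (1 - φ) - α * σ * (1 - s)))
      = (1 - γ) * (4 * τ ^ 2 * (1 - φ) ^ 2 - 4 * τ * (1 - φ) * (α * σ))
        + α ^ 2 * σ ^ 2 * ((1 - γ) - (1 - γ) * s ^ 2) := by ring
  rw [hB, hs2'] at hA
  have h2τ : (0:ℝ) < 2 * τ := by linarith
  rw [← mul_le_mul_iff_right₀ h2τ]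
  nlinarith [hA]

section valuefn
variable {σ τ α γ : ℝ}

lemma V_ge_W (hσ : 0 < σ) (hτ : 0 < τ) (hστ : σ + τ ≤ 1) (hα : 0 < α) (hα1 : α < 1)
    (hγ : 0 < γ) (hγ1 : γ < 1) (V : ℝ → ℝ) (hVc : ContinuousOn V (Set.Icc (0 : ℝ) 1))
    (hVfix : ∀ x ∈ Set.Icc (0 : ℝ) 1, V x = T σ τ α γ V x)
    {φ : ℝ} (hφ : φ ∈ Icc 0 (1 - α)) : Wfun σ τ α γ φ ≤ V φ := by
  have hσ1 : σ ≤ 1 := by linarith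
  have hφ1 : φ < 1 := by linarith [hφ.2]
  have h1 : R σ τ α φ σ + γ * V (S σ φ σ) ≤ V φ := by
    rw [hVfix φ ⟨hφ.1, by linarith [hφ.2]⟩, T]
    exact le_csSup (obj_bddAbove hσ hσ1 hφ.1 hφ1 V hVc)
      ⟨σ, σ_mem_Θ hσ hφ.1 hα hφ.2, rfl⟩
  rw [S_self, Rσ_formula hσ hφ1] at h1
  rw [Wfun, div_le_iff₀ (by linarith : (0:ℝ) < 1 - γ)]
  linarith

lemma V_le_W (hσ : 0 < σ) (hτ : 0 < τ) (hστ : σ + τ ≤ 1) (hα : 0 < α) (hα1 : α < 1)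
    (hγ : 0 < γ) (hγ1 : γ < 1) (V : ℝ → ℝ) (hVc : ContinuousOn V (Set.Icc (0 : ℝ) 1))
    (hVfix : ∀ x ∈ Set.Icc (0 : ℝ) 1, V x = T σ τ α γ V x)
    (hc : 0 < φstar σ τ α γ)
    {φ : ℝ} (hφ : φ ∈ Icc 0 (φstar σ τ α γ)) : V φ ≤ Wfun σ τ α γ φ := by
  have hσ1 : σ ≤ 1 := by linarith
  have hg : (0:ℝ) < 1 - γ := by linarith
  set c := φstar σ τ α γ with hcdef
  set A := 1 - (α * σ / (2 * τ)) * (1 + Real.sqrt (1 + 2 * τ * γ / (1 - γ))) with hAdef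
  have hm : 0 < min (1 - α) A := by
    by_contra h
    push_neg at h
    rw [hcdef, φstar, max_eq_left h] at hc
    exact lt_irrefl 0 hc
  have hceq : c = min (1 - α) A := max_eq_right hm.le
  have hcα : c ≤ 1 - α := hceq ▸ min_le_left _ _
  have hcA : c ≤ A := hceq ▸ min_le_right _ _
  have hc1 : c < 1 := by linarith
  -- key inequality on [0, c]
  have hkey : ∀ x ∈ Icc (0:ℝ) c,
      γ * α ^ 2 * σ ^ 2 ≤ 2 * (1 - γ) * ((1 - x) * (τ * (1 - x) - α * σ)) := by
    intro x hx
    apply key_of_le hσ hτ hα hγ hγ1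
    have := hx.2
    rw [hAdef] at hcA
    linarith
  -- continuity of Wfun on [0, c]
  have hWc : ContinuousOn (Wfun σ τ α γ) (Icc 0 c) := by
    apply ContinuousOn.div _ continuousOn_const (fun x _ => by positivity)
    apply ContinuousOn.sub continuousOn_const
    apply ContinuousOn.div continuousOn_const (by fun_prop)
    intro x hx
    have : x ≤ c := hx.2
    have : (0:ℝ) < 2 * (1 - x) := by linarith
    positivity
  -- maximizer of V - W on [0, c]
  obtain ⟨φm, hφm, hmax⟩ := (isCompact_Icc : IsCompact (Icc (0:ℝ) c)).exists_isMaxOn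
    ⟨0, by exact ⟨le_refl 0, hc.le⟩⟩
    ((hVc.mono (Icc_subset_Icc (le_refl 0) (by linarith))).sub hWc)
  set M := V φm - Wfun σ τ α γ φm with hM
  have hmax' : ∀ x ∈ Icc (0:ℝ) c, V x - Wfun σ τ α γ x ≤ M := fun x hx => hmax hx
  have hφm1 : φm < 1 := by linarith [hφm.2]
  -- the contraction step
  have hstep : V φm ≤ Wfun σ τ α γ φm + γ * M := by
    rw [hVfix φm ⟨hφm.1, by linarith [hφm.2]⟩, T]
    apply csSup_le (Set.Nonempty.image _ ⟨σ, σ_mem_Θ hσ hφm.1 hα (by linarith [hφm.2])⟩)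
    rintro y ⟨θ, hθ, rfl⟩
    show R σ τ α φm θ + γ * V (S σ φm θ) ≤ Wfun σ τ α γ φm + γ * M
    have hθ0 : 0 ≤ θ := hθ.1.1
    have hθσ : θ ≤ σ := hθ.1.2
    have hS0 : 0 ≤ S σ φm θ := S_nonneg hσ hσ1 hφm.1 hθ0
    have hSm : S σ φm θ ≤ φm := S_le_self hσ hφm.1 hθ0 hθσ
    have hSmem : S σ φm θ ∈ Icc (0:ℝ) c := ⟨hS0, le_trans hSm hφm.2⟩
    have h1 : V (S σ φm θ) ≤ Wfun σ τ α γ (S σ φm θ) + M := by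
      linarith [hmax' _ hSmem]
    have hq : 2 * σ * (1 - S σ φm θ) = 2 * σ * (1 - φm) + φm * (σ ^ 2 - θ ^ 2) := by
      rw [S]; field_simp; ring
    have h2 : R σ τ α φm θ + γ * Wfun σ τ α γ (S σ φm θ) ≤ Wfun σ τ α γ φm := by
      rw [R, if_pos hφm1, θ1, Wfun, Wfun]
      exact alg_key hσ hτ hα hγ hγ1 hφm.1 hφm1 hθ0 hθσ hq (hkey φm hφm)
    have := mul_le_mul_of_nonneg_left h1 hγ.le
    linarith
  have hMle : M ≤ 0 := by
    have h3 : M ≤ γ * M := by linarith [hstep, hM.le, hM.ge]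
    nlinarith [h3]
  linarith [hmax' φ hφ]

end valuefn

/-- Main theorem (tipping point for affirmative action): below φ0* the
threshold σ is optimal and there is no affirmative action; strictly between
φ0* and 1, every interior optimal threshold uses strict affirmative action. -/
theorem tipping_point_main (σ τ α γ : ℝ) (hσ : 0 < σ) (hτ : 0 < τ)
    (hστ : σ + τ ≤ 1) (hα : 0 < α) (hα1 : α < 1) (hγ : 0 < γ) (hγ1 : γ < 1)
    (V : ℝ → ℝ) (hVc : ContinuousOn V (Set.Icc (0 : ℝ) 1))
    (hVfix : ∀ φ0 ∈ Set.Icc (0 : ℝ) 1, V φ0 = T σ τ α γ V φ0)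
    (hVdec : StrictAntiOn V (Set.Icc (0 : ℝ) 1))
    (hVdiff : ∀ x ∈ Set.Ioo (0 : ℝ) 1, ∃ d : ℝ, HasDerivAt V d x ∧ d < 0) :
    (∀ φ0 : ℝ, 0 ≤ φ0 → φ0 < φstar σ τ α γ →
      V φ0 = R σ τ α φ0 σ + γ * V (S σ φ0 σ) ∧ σ ≤ θ1 σ τ α φ0 σ) ∧
    (∀ φ0 : ℝ, φstar σ τ α γ < φ0 → φ0 < 1 →
      ∀ θ0 ∈ Θ σ α φ0,
        V φ0 = R σ τ α φ0 θ0 + γ * V (S σ φ0 θ0) →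
        θ0 ∈ interior (Θ σ α φ0) →
        θ0 < θ1 σ τ α φ0 θ0) := by
  have hσ1 : σ ≤ 1 := by linarith
  have hg : (0:ℝ) < 1 - γ := by linarith
  constructor
  · -- Part (i)
    intro φ0 h0 hlt
    have hc : 0 < φstar σ τ α γ := lt_of_le_of_lt h0 hlt
    have hm : 0 < min (1 - α)
        (1 - (α * σ / (2 * τ)) * (1 + Real.sqrt (1 + 2 * τ * γ / (1 - γ)))) := by
      by_contra h
      push_neg at h
      rw [φstar, max_eq_left h] at hc
      exact lt_irrefl 0 hc
    have hceq : φstar σ τ α γ = min (1 - α)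
        (1 - (α * σ / (2 * τ)) * (1 + Real.sqrt (1 + 2 * τ * γ / (1 - γ)))) :=
      max_eq_right hm.le
    have hcα : φstar σ τ α γ ≤ 1 - α := hceq ▸ min_le_left _ _
    have hcA : φstar σ τ α γ ≤
        1 - (α * σ / (2 * τ)) * (1 + Real.sqrt (1 + 2 * τ * γ / (1 - γ))) :=
      hceq ▸ min_le_right _ _
    have hφ1 : φ0 < 1 := by linarith
    have hp : (0:ℝ) < 1 - φ0 := by linarith
    have hVeq : V φ0 = Wfun σ τ α γ φ0 :=
      le_antisymm (V_le_W hσ hτ hστ hα hα1 hγ hγ1 V hVc hVfix hc ⟨h0, hlt.le⟩)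
        (V_ge_W hσ hτ hστ hα hα1 hγ hγ1 V hVc hVfix ⟨h0, by linarith⟩)
    have hkey : γ * α ^ 2 * σ ^ 2 ≤ 2 * (1 - γ) * ((1 - φ0) * (τ * (1 - φ0) - α * σ)) := by
      apply key_of_le hσ hτ hα hγ hγ1
      linarith
    have hτα : 0 < τ * (1 - φ0) - α * σ := by
      nlinarith [hkey, mul_pos (mul_pos hγ (pow_pos hα 2)) (pow_pos hσ 2), mul_pos hg hp]
    constructor
    · rw [S_self, hVeq, Rσ_formula hσ hφ1, Wfun]
      field_simp
      ring
    · rw [θ1, le_div_iff₀ hp]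
      nlinarith [hτα]
  · -- Part (ii)
    intro φ0 hgt hlt1 θ0 hθmem hopt hint
    have hφpos : 0 < φ0 := lt_of_le_of_lt (le_max_left 0 _) hgt
    have hio : θ0 ∈ Ioo 0 σ := by
      have h := interior_mono (Θ_subset σ α φ0) hint
      rwa [interior_Icc] at h
    have hp : (0:ℝ) < 1 - φ0 := by linarith
    have hSmem : S σ φ0 θ0 ∈ Ioo (0:ℝ) 1 := by
      constructor
      · have h : S σ φ0 θ0 = φ0 * (1 - (σ ^ 2 - θ0 ^ 2) / (2 * σ)) := by
          rw [S]; ring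
        rw [h]
        apply mul_pos hφpos
        rw [sub_pos, div_lt_one (by positivity)]
        nlinarith [hio.1, hio.2]
      · exact lt_of_le_of_lt (S_le_self hσ hφpos.le hio.1.le hio.2.le) hlt1
    obtain ⟨d, hd, hdneg⟩ := hVdiff _ hSmem
    -- derivative of S in θ
    have hSd : HasDerivAt (fun t => S σ φ0 t) (φ0 * θ0 / σ) θ0 := by
      have hfe : (fun t => S σ φ0 t)
          = fun t => φ0 - φ0 / (2 * σ) * (σ ^ 2 - t ^ 2) := funext fun t => by rw [S]
      rw [hfe]
      have h := (((hasDerivAt_pow 2 θ0).const_sub (σ ^ 2)).const_mul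
        (φ0 / (2 * σ))).const_sub φ0
      refine h.congr_deriv ?_
      push_cast; field_simp
    have hVSd : HasDerivAt (fun t => V (S σ φ0 t)) (d * (φ0 * θ0 / σ)) θ0 := by
      have h := hd.comp θ0 hSd
      exact h
    -- derivative of R in θ
    have hRd : HasDerivAt (fun t => R σ τ α φ0 t)
        (φ0 / σ * (θ1 σ τ α φ0 θ0 - θ0)) θ0 := by
      have hfe : (fun t => R σ τ α φ0 t) = fun t =>
          (φ0 / (2 * σ)) * (σ ^ 2 - t ^ 2)
            + ((1 - φ0) / (2 * σ)) * ((σ + τ) ^ 2 -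
              ((σ * (1 - α) + (1 - φ0) * τ - φ0 * t) / (1 - φ0)) ^ 2) :=
        funext fun t => by rw [R, if_pos hlt1, θ1]
      rw [hfe]
      have h1 : HasDerivAt (fun t : ℝ =>
          (σ * (1 - α) + (1 - φ0) * τ - φ0 * t) / (1 - φ0))
          (-(φ0 * 1) / (1 - φ0)) θ0 :=
        (((hasDerivAt_id θ0).const_mul φ0).const_sub
          (σ * (1 - α) + (1 - φ0) * τ)).div_const (1 - φ0)
      have h2 := ((h1.pow 2).const_sub ((σ + τ) ^ 2)).const_mul ((1 - φ0) / (2 * σ))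
      have h3 := ((hasDerivAt_pow 2 θ0).const_sub (σ ^ 2)).const_mul (φ0 / (2 * σ))
      have h4 := h3.add h2
      refine h4.congr_deriv ?_
      rw [θ1]
      push_cast
      field_simp
      ring
    have hgd : HasDerivAt (fun t => R σ τ α φ0 t + γ * V (S σ φ0 t))
        (φ0 / σ * (θ1 σ τ α φ0 θ0 - θ0) + γ * (d * (φ0 * θ0 / σ))) θ0 :=
      hRd.add (hVSd.const_mul γ)
    -- θ0 is a local max of the objective
    have hglob : ∀ t ∈ Θ σ α φ0, R σ τ α φ0 t + γ * V (S σ φ0 t)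
        ≤ R σ τ α φ0 θ0 + γ * V (S σ φ0 θ0) := by
      intro t ht
      have hb := obj_bddAbove (τ := τ) (α := α) (γ := γ) hσ hσ1 hφpos.le hlt1 V hVc
      have h5 : R σ τ α φ0 t + γ * V (S σ φ0 t) ≤ T σ τ α γ V φ0 :=
        le_csSup hb ⟨t, ht, rfl⟩
      rw [← hVfix φ0 ⟨hφpos.le, hlt1.le⟩, hopt] at h5
      exact h5
    have hloc : IsLocalMax (fun t => R σ τ α φ0 t + γ * V (S σ φ0 t)) θ0 := by
      have hn : Θ σ α φ0 ∈ nhds θ0 := mem_interior_iff_mem_nhds.mp hint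
      filter_upwards [hn] with t ht
      exact hglob t ht
    have hzero := hloc.hasDerivAt_eq_zero hgd
    have hσne : σ ≠ 0 := ne_of_gt hσ
    have h9 : φ0 * (θ1 σ τ α φ0 θ0 - θ0) + γ * (d * (φ0 * θ0)) = 0 := by
      have h10 := congrArg (fun x => σ * x) hzero
      simp only [mul_zero] at h10
      field_simp at h10
      linarith [h10]
    nlinarith [h9, mul_pos (mul_pos hγ (neg_pos.mpr hdneg)) (mul_pos hφpos hio.1)]
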